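/- Let α be a real number with √(100/1791) < α < √(100/199), and let Y ⊆ [0,1]^k ⊂ ℝ^k be a finite set such that |u - v| > α·√k for every two distinct points u, v ∈ Y. Then |Y| ≤ 600 · 3^{(9/8)·(1 - (199/100)·α^2)·k}. -/

import Mathlib

open Finset

lemma sum_sq_diff_le {β : Type*} (S : Finset β) (u : β → ℝ) (h : ℝ)
    (hb : ∀ x ∈ S, |u x| ≤ h) :
    ∑ x ∈ S, ∑ y ∈ S, (u x - u y) ^ 2 ≤ 2 * (S.card : ℝ) ^ 2 * h ^ 2 := by
  have e1 : ∀ x ∈ S, ∑ y ∈ S, (u x - u y) ^ 2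
      = (S.card : ℝ) * u x ^ 2 - 2 * u x * (∑ y ∈ S, u y) + ∑ y ∈ S, u y ^ 2 := by
    intro x hx
    have : ∀ y ∈ S, (u x - u y) ^ 2 = u x ^ 2 - 2 * u x * u y + u y ^ 2 := by
      intro y hy; ring
    rw [Finset.sum_congr rfl this]
    rw [Finset.sum_add_distrib, Finset.sum_sub_distrib, Finset.sum_const, ← Finset.mul_sum]
    ring
  rw [Finset.sum_congr rfl e1]
  rw [Finset.sum_add_distrib, Finset.sum_sub_distrib, Finset.sum_const, ← Finset.mul_sum,
    ← Finset.sum_mul]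
  have hsq : ∑ x ∈ S, u x ^ 2 ≤ (S.card : ℝ) * h ^ 2 := by
    calc ∑ x ∈ S, u x ^ 2 ≤ ∑ x ∈ S, h ^ 2 := by
          apply Finset.sum_le_sum
          intro x hx
          have := hb x hx
          nlinarith [abs_nonneg (u x), sq_abs (u x)]
      _ = (S.card : ℝ) * h ^ 2 := by rw [Finset.sum_const, nsmul_eq_mul]
  have h3 : ∑ i ∈ S, 2 * u i = 2 * ∑ i ∈ S, u i := by rw [← Finset.mul_sum]
  rw [h3, nsmul_eq_mul]
  nlinarith [sq_nonneg (∑ x ∈ S, u x), Nat.cast_nonneg (α := ℝ) S.card]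

/-- If the points of `S` are pairwise at distance at least `α√k` and each coordinate `t`
of every point is within `h t` of `m t`, with `∑ 2 h t² ≤ (199/200) α² k`, then `|S| ≤ 200`. -/
lemma fiber_bound (k : ℕ) (α : ℝ) (hα : 0 < α) (hk : 0 < k)
    (S : Finset (EuclideanSpace ℝ (Fin k)))
    (m h : Fin k → ℝ)
    (hm : ∀ x ∈ S, ∀ t, |x t - m t| ≤ h t)
    (hsum : (∑ t, 2 * h t ^ 2) ≤ 199 / 200 * α ^ 2 * k)
    (hsep : ∀ u ∈ S, ∀ v ∈ S, u ≠ v → α * Real.sqrt k ≤ dist u v) :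
    S.card ≤ 200 := by
  classical
  set n : ℕ := S.card with hn
  by_contra hcon
  push_neg at hcon
  have hn1 : 1 ≤ n := by omega
  have hdist2 : ∀ x ∈ S, ∀ y ∈ S, dist x y ^ 2 = ∑ t, (x t - y t) ^ 2 := by
    intro x hx y hy
    rw [EuclideanSpace.dist_eq]
    rw [Real.sq_sqrt (by positivity)]
    congr 1; ext t; rw [Real.dist_eq, sq_abs]
  have hAup : ∑ x ∈ S, ∑ y ∈ S, dist x y ^ 2 ≤ (n : ℝ) ^ 2 * (199 / 200 * α ^ 2 * k) := by
    calc ∑ x ∈ S, ∑ y ∈ S, dist x y ^ 2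
        = ∑ x ∈ S, ∑ y ∈ S, ∑ t, (x t - y t) ^ 2 := by
          apply Finset.sum_congr rfl; intro x hx
          apply Finset.sum_congr rfl; intro y hy
          exact hdist2 x hx y hy
      _ = ∑ x ∈ S, ∑ t, ∑ y ∈ S, (x t - y t) ^ 2 :=
          Finset.sum_congr rfl fun x _ => Finset.sum_comm
      _ = ∑ t, ∑ x ∈ S, ∑ y ∈ S, (x t - y t) ^ 2 := Finset.sum_comm
      _ ≤ ∑ t : Fin k, 2 * (n : ℝ) ^ 2 * h t ^ 2 := by
          apply Finset.sum_le_sum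
          intro t ht
          have := sum_sq_diff_le S (fun x => x t - m t) (h t)
            (fun x hx => hm x hx t)
          simpa using this
      _ = (n : ℝ) ^ 2 * ∑ t, 2 * h t ^ 2 := by
          rw [Finset.mul_sum]; apply Finset.sum_congr rfl; intro t ht; ring
      _ ≤ (n : ℝ) ^ 2 * (199 / 200 * α ^ 2 * k) := by
          apply mul_le_mul_of_nonneg_left hsum (by positivity)
  have hAlo : ((n : ℝ) ^ 2 - n) * (α ^ 2 * k) ≤ ∑ x ∈ S, ∑ y ∈ S, dist x y ^ 2 := by
    have h1 : ∑ p ∈ S.offDiag, dist p.1 p.2 ^ 2 ≤ ∑ x ∈ S, ∑ y ∈ S, dist x y ^ 2 := by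
      rw [← Finset.sum_product']
      apply Finset.sum_le_sum_of_subset_of_nonneg
      · intro p hp
        rw [Finset.mem_offDiag] at hp
        exact Finset.mem_product.mpr ⟨hp.1, hp.2.1⟩
      · intro p _ _; positivity
    have h2 : (S.offDiag.card : ℝ) • (α ^ 2 * k) ≤ ∑ p ∈ S.offDiag, dist p.1 p.2 ^ 2 := by
      rw [Nat.cast_smul_eq_nsmul]
      apply Finset.card_nsmul_le_sum
      intro p hp
      rw [Finset.mem_offDiag] at hp
      have hd := hsep p.1 hp.1 p.2 hp.2.1 hp.2.2
      have hαk : 0 ≤ α * Real.sqrt k := by positivity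
      have : (α * Real.sqrt k) ^ 2 ≤ dist p.1 p.2 ^ 2 := by
        apply sq_le_sq' (by linarith) hd
      calc α ^ 2 * k = (α * Real.sqrt k) ^ 2 := by
            rw [mul_pow, Real.sq_sqrt (Nat.cast_nonneg k)]
        _ ≤ _ := this
    have h3 : (S.offDiag.card : ℝ) = (n : ℝ) ^ 2 - n := by
      rw [Finset.offDiag_card, Nat.cast_sub (Nat.le_mul_of_pos_left _ (by omega))]
      push_cast; ring
    rw [smul_eq_mul, h3] at h2
    linarith
  have hαk : (0 : ℝ) < α ^ 2 * k := by positivity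
  have key : ((n : ℝ) ^ 2 - n) ≤ (n : ℝ) ^ 2 * (199 / 200) := by
    nlinarith
  have : (200 : ℝ) < n := by exact_mod_cast hcon
  nlinarith


noncomputable def cell3 (r : ℝ) : Fin 3 :=
  ⟨min ⌊3 * r⌋₊ 2, Nat.lt_succ_of_le (min_le_right _ _)⟩

lemma cell3_close (r : ℝ) (h0 : 0 ≤ r) (h1 : r ≤ 1) :
    |r - ((cell3 r : ℕ) : ℝ) / 3 - 1 / 6| ≤ 1 / 6 := by
  have hval : (cell3 r : ℕ) = min ⌊3 * r⌋₊ 2 := rfl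
  set i : ℕ := min ⌊3 * r⌋₊ 2 with hi
  have hlo : (i : ℝ) ≤ 3 * r := by
    have h1' : (i : ℝ) ≤ (⌊3 * r⌋₊ : ℝ) := by exact_mod_cast min_le_left _ _
    have h2' : (⌊3 * r⌋₊ : ℝ) ≤ 3 * r := Nat.floor_le (by linarith)
    linarith
  have hhi : 3 * r ≤ (i : ℝ) + 1 := by
    by_cases hc : ⌊3 * r⌋₊ ≤ 2
    · have : i = ⌊3 * r⌋₊ := min_eq_left hc
      rw [this]
      exact le_of_lt (Nat.lt_floor_add_one (3 * r))
    · have : i = 2 := min_eq_right (by omega)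
      rw [this]; push_cast; linarith
  rw [hval, abs_le]
  constructor <;> linarith

/-- Let `√(100/1791) < α < √(100/199)` and let `Y ⊆ [0,1]^k` be a finite set whose points
are pairwise at distance greater than `α·√k`. Then
`|Y| ≤ 600 · 3^{(9/8)(1 - (199/100)α²)k}`. -/
theorem stmt_14 (k : ℕ) (α : ℝ)
    (h0 : Real.sqrt (100 / 1791) < α) (h1 : α < Real.sqrt (100 / 199))
    (Y : Finset (EuclideanSpace ℝ (Fin k)))
    (hcube : ∀ y ∈ Y, ∀ i, y i ∈ Set.Icc (0 : ℝ) 1)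
    (hsep : ∀ u ∈ Y, ∀ v ∈ Y, u ≠ v → α * Real.sqrt k < dist u v) :
    (Y.card : ℝ) ≤ 600 * (3 : ℝ) ^ (9 / 8 * (1 - 199 / 100 * α ^ 2) * (k : ℝ)) := by
  classical
  have hα : 0 < α := lt_trans (Real.sqrt_pos.mpr (by norm_num)) h0
  have hα2lo : 100 / 1791 < α ^ 2 := (Real.sqrt_lt' hα).mp h0
  have hα2hi : α ^ 2 < 100 / 199 := (Real.lt_sqrt hα.le).mp h1
  set x : ℝ := 9 / 8 * (1 - 199 / 100 * α ^ 2) * (k : ℝ) with hxdef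
  have hx0 : 0 ≤ x := by
    apply mul_nonneg (by nlinarith) (Nat.cast_nonneg k)
  rcases Nat.eq_zero_or_pos k with hk0 | hk
  · -- k = 0 : the space is a subsingleton
    subst hk0
    have hcard : Y.card ≤ 1 := by
      apply Finset.card_le_one.mpr
      intro a _ b _
      ext t
      exact t.elim0
    have hx : x = 0 := by simp [hxdef]
    rw [hx, Real.rpow_zero]
    have : (Y.card : ℝ) ≤ 1 := by exact_mod_cast hcard
    linarith
  · have hk' : (1 : ℝ) ≤ (k : ℝ) := by exact_mod_cast hk
    have hxk : x ≤ (k : ℝ) := by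
      have h9 : 9 / 8 * (1 - 199 / 100 * α ^ 2) ≤ 1 := by nlinarith
      nlinarith
    set j : ℕ := ⌈x⌉₊ with hj
    have hjk : j ≤ k := Nat.ceil_le.mpr hxk
    have hjx : x ≤ (j : ℝ) := Nat.le_ceil x
    have hjx1 : (j : ℝ) < x + 1 := Nat.ceil_lt_add_one hx0
    set F : EuclideanSpace ℝ (Fin k) → (Fin j → Fin 3) :=
      fun y t => cell3 (y (Fin.castLE hjk t)) with hF
    have hcount : Y.card = ∑ g : Fin j → Fin 3, (Y.filter fun y => F y = g).card :=
      Finset.card_eq_sum_card_fiberwise (fun y _ => Finset.mem_univ (F y))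
    -- each fiber has at most 200 points
    have hfiber : ∀ g : Fin j → Fin 3, (Y.filter fun y => F y = g).card ≤ 200 := by
      intro g
      set S := Y.filter fun y => F y = g with hS
      set m : Fin k → ℝ := fun t =>
        if ht : (t : ℕ) < j then ((g ⟨t, ht⟩ : ℕ) : ℝ) / 3 + 1 / 6 else 1 / 2 with hm'
      set h : Fin k → ℝ := fun t => if (t : ℕ) < j then (1 / 6 : ℝ) else 1 / 2 with hh'
      apply fiber_bound k α hα hk S m h
      · -- coordinates close to m
        intro z hz t
        rw [hS, Finset.mem_filter] at hz
        obtain ⟨hzY, hzF⟩ := hz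
        have hicc := hcube z hzY t
        by_cases ht : (t : ℕ) < j
        · have hcell : cell3 (z t) = g ⟨t, ht⟩ := by
            have hthis := congrFun hzF ⟨(t : ℕ), ht⟩
            simp only [hF] at hthis
            rwa [show Fin.castLE hjk ⟨(t : ℕ), ht⟩ = t from Fin.ext rfl] at hthis
          simp only [hm', hh', dif_pos ht, if_pos ht]
          have := cell3_close (z t) hicc.1 hicc.2
          rw [hcell, sub_sub] at this
          exact this
        · simp only [hm', hh', dif_neg ht, if_neg ht]
          rw [abs_le]
          constructor <;> [linarith [hicc.1]; linarith [hicc.2]]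
      · -- the sum of 2 h t ^ 2
        have hsum_eq : (∑ t : Fin k, 2 * h t ^ 2)
            = (j : ℝ) * (1 / 18) + ((k : ℝ) - j) * (1 / 2) := by
          have hfn : ∀ t : Fin k, 2 * h t ^ 2
              = (fun i : ℕ => if i < j then (1 / 18 : ℝ) else 1 / 2) (t : ℕ) := by
            intro t
            simp only [hh']
            split_ifs <;> norm_num
          rw [Finset.sum_congr rfl (fun t _ => hfn t)]
          rw [Fin.sum_univ_eq_sum_range (fun i => if i < j then (1 / 18 : ℝ) else 1 / 2) k]
          rw [Finset.range_eq_Ico, ← Finset.sum_Ico_consecutive _ (Nat.zero_le j) hjk]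
          have e1 : ∑ i ∈ Finset.Ico 0 j, (if i < j then (1 / 18 : ℝ) else 1 / 2)
              = (j : ℝ) * (1 / 18) := by
            rw [Finset.sum_congr rfl (fun i hi => if_pos (Finset.mem_Ico.mp hi).2)]
            rw [Finset.sum_const, Nat.card_Ico, Nat.sub_zero, nsmul_eq_mul]
          have e2 : ∑ i ∈ Finset.Ico j k, (if i < j then (1 / 18 : ℝ) else 1 / 2)
              = ((k : ℝ) - j) * (1 / 2) := by
            rw [Finset.sum_congr rfl
              (fun i hi => if_neg (by have := (Finset.mem_Ico.mp hi).1; omega))]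
            rw [Finset.sum_const, Nat.card_Ico, nsmul_eq_mul, Nat.cast_sub hjk]
          rw [e1, e2]
        rw [hsum_eq]
        -- j ≥ (9/8)(1 - 1.99 α²) k  gives the bound
        have : 9 / 8 * (1 - 199 / 100 * α ^ 2) * (k : ℝ) ≤ (j : ℝ) := hjx
        nlinarith
      · intro u hu v hv huv
        rw [hS, Finset.mem_filter] at hu hv
        exact le_of_lt (hsep u hu.1 v hv.1 huv)
    have hcardnat : Y.card ≤ 3 ^ j * 200 := by
      rw [hcount]
      calc ∑ g : Fin j → Fin 3, (Y.filter fun y => F y = g).card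
          ≤ ∑ _g : Fin j → Fin 3, 200 := Finset.sum_le_sum fun g _ => hfiber g
        _ = 3 ^ j * 200 := by
            rw [Finset.sum_const, Finset.card_univ, smul_eq_mul]
            congr 1
            simp [Fintype.card_fun]
    -- now the real-number estimate
    have step1 : (Y.card : ℝ) ≤ 200 * (3 : ℝ) ^ ((j : ℕ) : ℝ) := by
      rw [Real.rpow_natCast]
      calc (Y.card : ℝ) ≤ ((3 ^ j * 200 : ℕ) : ℝ) := by exact_mod_cast hcardnat
        _ = 200 * (3 : ℝ) ^ j := by push_cast; ring
    have step2 : (3 : ℝ) ^ ((j : ℕ) : ℝ) ≤ (3 : ℝ) ^ (x + 1) :=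
      Real.rpow_le_rpow_of_exponent_le (by norm_num) hjx1.le
    have step3 : (3 : ℝ) ^ (x + 1) = (3 : ℝ) ^ x * 3 :=
      Real.rpow_add_one (by norm_num) x
    calc (Y.card : ℝ) ≤ 200 * (3 : ℝ) ^ ((j : ℕ) : ℝ) := step1
      _ ≤ 200 * ((3 : ℝ) ^ x * 3) := by
          rw [← step3]
          exact mul_le_mul_of_nonneg_left step2 (by norm_num)
      _ = 600 * (3 : ℝ) ^ x := by ring
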